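/- Let P be a real polynomial of degree at most n in one variable, and let a < b be real numbers. Then for every x ∈ [a,b], |P'(x)| · √((x−a)(b−x)) ≤ n · max_{t∈[a,b]} |P(t)|. -/

import Mathlib

open Complex Finset Polynomial

noncomputable section BernsteinAux

namespace BernsteinAux

/-- nodes -/
def xk (n k : ℕ) : ℝ := (2 * k + 1) * Real.pi / (2 * n)

/-- weights -/
def wk (n k : ℕ) : ℝ := (-1 : ℝ) ^ k / Real.sin (xk n k / 2) ^ 2

def gg (n : ℕ) (m : ℤ) : ℂ :=
  ∑ k ∈ Finset.range (2 * n), (wk n k : ℂ) * Complex.exp ((m : ℂ) * (xk n k : ℝ) * I)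

lemma xk_half_mem {n k : ℕ} (hn : 0 < n) (hk : k < 2 * n) :
    0 < xk n k / 2 ∧ xk n k / 2 < Real.pi := by
  have hπ := Real.pi_pos
  constructor
  · have : (0:ℝ) < (2 * k + 1) * Real.pi := by positivity
    have h2n : (0:ℝ) < 2 * n := by positivity
    unfold xk; positivity
  · unfold xk
    rw [div_lt_iff₀ (by norm_num : (0:ℝ) < 2)]
    rw [div_lt_iff₀ (by positivity : (0:ℝ) < 2 * n)]
    have h4 : (2 * (k:ℝ) + 1) < 2 * n * 2 := by
      have : (2 * k + 1 : ℝ) < 4 * n := by exact_mod_cast (by omega : 2 * k + 1 < 4 * n)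
      nlinarith
    nlinarith

lemma sin_xk_half_pos {n k : ℕ} (hn : 0 < n) (hk : k < 2 * n) :
    0 < Real.sin (xk n k / 2) := by
  obtain ⟨h1, h2⟩ := xk_half_mem hn hk
  exact Real.sin_pos_of_pos_of_lt_pi h1 h2

lemma xk_reflect {n k : ℕ} (hk : k < 2 * n) :
    xk n (2 * n - 1 - k) = 2 * Real.pi - xk n k := by
  have h1 : ((2 * n - 1 - k : ℕ) : ℝ) = 2 * n - 1 - k := by
    have : k ≤ 2 * n - 1 := by omega
    push_cast [Nat.cast_sub this, Nat.cast_sub (by omega : 1 ≤ 2 * n)]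
    ring
  have hn : 0 < n := by omega
  unfold xk
  rw [h1]
  have h2n : (2 * n : ℝ) ≠ 0 := by positivity
  field_simp
  ring

lemma wk_reflect {n k : ℕ} (hn : 0 < n) (hk : k < 2 * n) :
    wk n (2 * n - 1 - k) = - wk n k := by
  have hsign : (-1 : ℝ) ^ (2 * n - 1 - k) = -(-1 : ℝ) ^ k := by
    have hadd : (2 * n - 1 - k) + k = 2 * n - 1 := by omega
    have h1 : (-1 : ℝ) ^ ((2 * n - 1 - k) + k) = (-1 : ℝ) ^ (2 * n - 1) := by rw [hadd]
    have hodd : Odd (2 * n - 1) := by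
      refine ⟨n - 1, by omega⟩
    rw [pow_add, hodd.neg_one_pow] at h1
    have hk2 : ((-1 : ℝ) ^ k) * ((-1 : ℝ) ^ k) = 1 := by
      rw [← pow_add]; exact Even.neg_one_pow ⟨k, rfl⟩
    linear_combination ((-1:ℝ) ^ k) * h1 - ((-1:ℝ) ^ (2*n-1-k)) * hk2
  have hsin : Real.sin (xk n (2 * n - 1 - k) / 2) = Real.sin (xk n k / 2) := by
    rw [xk_reflect hk]
    have : (2 * Real.pi - xk n k) / 2 = Real.pi - xk n k / 2 := by ring
    rw [this, Real.sin_pi_sub]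
  unfold wk
  rw [hsign, hsin]
  ring

lemma gg_neg (n : ℕ) (hn : 0 < n) (m : ℤ) : gg n (-m) = - gg n m := by
  have key : gg n m = - gg n (-m) := by
    unfold gg
    rw [← Finset.sum_range_reflect]
    rw [← Finset.sum_neg_distrib]
    apply Finset.sum_congr rfl
    intro k hk
    have hk' : k < 2 * n := Finset.mem_range.mp hk
    rw [wk_reflect hn hk', xk_reflect hk']
    have hexp : Complex.exp ((m : ℂ) * ((2 * Real.pi - xk n k : ℝ) : ℂ) * I)
        = Complex.exp (((-m : ℤ) : ℂ) * ((xk n k : ℝ) : ℂ) * I) := by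
      rw [show (m : ℂ) * ((2 * Real.pi - xk n k : ℝ) : ℂ) * I
          = (m : ℤ) * (2 * Real.pi * I) + ((-m : ℤ) : ℂ) * ((xk n k : ℝ) : ℂ) * I by
        push_cast; ring]
      rw [Complex.exp_add, Complex.exp_int_mul_two_pi_mul_I, one_mul]
    rw [hexp]
    push_cast
    ring
  rw [key]; ring

lemma gg_zero (n : ℕ) (hn : 0 < n) : gg n 0 = 0 := by
  have := gg_neg n hn 0
  rw [neg_zero] at this
  linear_combination (1/2 : ℂ) * this

lemma alt_sum (n m : ℕ) (h1 : 1 ≤ m) (h2 : m < n) :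
    ∑ k ∈ Finset.range (2 * n), (-1 : ℂ) ^ k * Complex.exp ((m : ℂ) * (xk n k : ℝ) * I) = 0 := by
  have hn : 0 < n := by omega
  have hn' : (n : ℝ) ≠ 0 := by positivity
  set r : ℂ := - Complex.exp ((m : ℂ) * (Real.pi / n : ℝ) * I) with hr
  have hterm : ∀ k ∈ Finset.range (2 * n),
      (-1 : ℂ) ^ k * Complex.exp ((m : ℂ) * (xk n k : ℝ) * I)
      = Complex.exp ((m : ℂ) * (Real.pi / (2 * n) : ℝ) * I) * r ^ k := by
    intro k _
    have h3 : r ^ k = (-1 : ℂ) ^ k * Complex.exp ((k : ℕ) * ((m : ℂ) * ((Real.pi / n : ℝ) : ℂ) * I)) := by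
      rw [hr, neg_pow, ← Complex.exp_nat_mul]
    have harg : (m : ℂ) * ((xk n k : ℝ) : ℂ) * I
        = (m : ℂ) * ((Real.pi / (2 * n) : ℝ) : ℂ) * I + (k : ℕ) * ((m : ℂ) * ((Real.pi / n : ℝ) : ℂ) * I) := by
      unfold xk
      push_cast
      field_simp
      ring
    rw [h3, harg, Complex.exp_add]
    ring
  rw [Finset.sum_congr rfl hterm, ← Finset.mul_sum]
  have hr1 : r ≠ 1 := by
    intro h
    have hexp1 : Complex.exp (((m * Real.pi / n : ℝ) : ℂ) * I) = -1 := by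
      rw [hr] at h
      have h' : Complex.exp ((m : ℂ) * ((Real.pi / n : ℝ) : ℂ) * I) = -1 := by
        linear_combination -h
      rw [← h']
      congr 1
      push_cast
      ring
    rw [Complex.exp_mul_I] at hexp1
    have him := congrArg Complex.im hexp1
    simp only [Complex.add_im, Complex.mul_im, Complex.I_re, Complex.I_im,
      Complex.cos_ofReal_im, Complex.sin_ofReal_re, Complex.sin_ofReal_im,
      Complex.neg_im, Complex.one_im, neg_zero, mul_zero, mul_one, zero_add,
      add_zero, zero_mul] at him
    have hy1 : 0 < (m * Real.pi / n : ℝ) := by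
      have := Real.pi_pos
      have hm : (0:ℝ) < m := by exact_mod_cast h1
      positivity
    have hy2 : (m * Real.pi / n : ℝ) < Real.pi := by
      rw [div_lt_iff₀ (by positivity : (0:ℝ) < n)]
      have hm : (m:ℝ) < n := by exact_mod_cast h2
      nlinarith [Real.pi_pos]
    have := Real.sin_pos_of_pos_of_lt_pi hy1 hy2
    linarith
  rw [geom_sum_eq hr1]
  have hrpow : r ^ (2 * n) = 1 := by
    rw [hr, neg_pow, ← Complex.exp_nat_mul]
    have hnc : (n : ℂ) ≠ 0 := Nat.cast_ne_zero.mpr (by omega)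
    have : ((2 * n : ℕ) : ℂ) * ((m : ℂ) * ((Real.pi / n : ℝ) : ℂ) * I) = (m : ℤ) * (2 * Real.pi * I) := by
      push_cast
      field_simp
    rw [this, Complex.exp_int_mul_two_pi_mul_I]
    simp [pow_mul]
  rw [hrpow]
  simp

lemma gg_rec (n : ℕ) (m : ℕ) (h1 : 1 ≤ m) (h2 : m < n) :
    gg n ((m : ℤ) + 1) + gg n ((m : ℤ) - 1) = 2 * gg n m := by
  have hn : 0 < n := by omega
  have key : gg n ((m : ℤ) + 1) + gg n ((m : ℤ) - 1) - 2 * gg n m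
      = -4 * ∑ k ∈ Finset.range (2 * n), (-1 : ℂ) ^ k * Complex.exp ((m : ℂ) * (xk n k : ℝ) * I) := by
    unfold gg
    rw [← Finset.sum_add_distrib, Finset.mul_sum, ← Finset.sum_sub_distrib, Finset.mul_sum]
    apply Finset.sum_congr rfl
    intro k hk
    have hk' : k < 2 * n := Finset.mem_range.mp hk
    have hsin := sin_xk_half_pos hn hk'
    have e1 : Complex.exp ((((m : ℤ) + 1 : ℤ) : ℂ) * ((xk n k : ℝ) : ℂ) * I)
        = Complex.exp ((m : ℂ) * ((xk n k : ℝ) : ℂ) * I) * Complex.exp (((xk n k : ℝ) : ℂ) * I) := by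
      rw [← Complex.exp_add]; congr 1; push_cast; ring
    have e2 : Complex.exp ((((m : ℤ) - 1 : ℤ) : ℂ) * ((xk n k : ℝ) : ℂ) * I)
        = Complex.exp ((m : ℂ) * ((xk n k : ℝ) : ℂ) * I) * Complex.exp (-(((xk n k : ℝ) : ℂ) * I)) := by
      rw [← Complex.exp_add]; congr 1; push_cast; ring
    rw [e1, e2]
    push_cast
    have hcos : Complex.exp (((xk n k : ℝ) : ℂ) * I) + Complex.exp (-(((xk n k : ℝ) : ℂ) * I))
        = 2 * ((Real.cos (xk n k) : ℝ) : ℂ) := by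
      rw [Complex.exp_mul_I]
      have : -(((xk n k : ℝ) : ℂ) * I) = ((- xk n k : ℝ) : ℂ) * I := by push_cast; ring
      rw [this, Complex.exp_mul_I]
      rw [← Complex.ofReal_cos, ← Complex.ofReal_sin, ← Complex.ofReal_cos, ← Complex.ofReal_sin]
      rw [Real.cos_neg, Real.sin_neg]
      push_cast
      ring
    have hcos2 : Real.cos (xk n k) = 1 - 2 * Real.sin (xk n k / 2) ^ 2 := by
      have := Real.sin_sq_eq_half_sub (xk n k / 2)
      have h2 : 2 * (xk n k / 2) = xk n k := by ring
      rw [h2] at this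
      linarith
    have hwk : (wk n k : ℂ) * (2 * ((Real.cos (xk n k) : ℝ) : ℂ) - 2) = -4 * (-1 : ℂ) ^ k := by
      have hs : Real.sin (xk n k / 2) ≠ 0 := ne_of_gt hsin
      have hreal : wk n k * (2 * Real.cos (xk n k) - 2) = -4 * (-1 : ℝ) ^ k := by
        unfold wk
        rw [hcos2]
        field_simp
        ring
      calc (wk n k : ℂ) * (2 * ((Real.cos (xk n k) : ℝ) : ℂ) - 2)
          = ((wk n k * (2 * Real.cos (xk n k) - 2) : ℝ) : ℂ) := by push_cast; ring
        _ = -4 * (-1 : ℂ) ^ k := by rw [hreal]; push_cast; ring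
    calc (wk n k : ℂ) * (Complex.exp ((m : ℂ) * ((xk n k : ℝ) : ℂ) * I) * Complex.exp (((xk n k : ℝ) : ℂ) * I))
          + (wk n k : ℂ) * (Complex.exp ((m : ℂ) * ((xk n k : ℝ) : ℂ) * I) * Complex.exp (-(((xk n k : ℝ) : ℂ) * I)))
          - 2 * ((wk n k : ℂ) * Complex.exp ((m : ℂ) * ((xk n k : ℝ) : ℂ) * I))
        = (wk n k : ℂ) * (2 * ((Real.cos (xk n k) : ℝ) : ℂ) - 2) * Complex.exp ((m : ℂ) * ((xk n k : ℝ) : ℂ) * I) := by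
          rw [← hcos]; ring
      _ = -4 * ((-1 : ℂ) ^ k * Complex.exp ((m : ℂ) * ((xk n k : ℝ) : ℂ) * I)) := by rw [hwk]; ring
  rw [alt_sum n m h1 h2] at key
  linear_combination key

lemma gg_nat (n : ℕ) (hn : 0 < n) : ∀ m : ℕ, m ≤ n → gg n m = (m : ℂ) * gg n 1 := by
  intro m
  induction m using Nat.strong_induction_on with
  | _ m ih =>
    match m with
    | 0 => intro _; simpa using gg_zero n hn
    | 1 => intro _; simp
    | (m + 2) =>
      intro hm
      have h1 : gg n ((m + 1 : ℕ) : ℤ) = ((m + 1 : ℕ) : ℂ) * gg n 1 := ih (m+1) (by omega) (by omega)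
      have h0 : gg n ((m : ℕ) : ℤ) = ((m : ℕ) : ℂ) * gg n 1 := ih m (by omega) (by omega)
      have hrec := gg_rec n (m + 1) (by omega) (by omega)
      have e1 : ((m + 1 : ℕ) : ℤ) + 1 = ((m + 2 : ℕ) : ℤ) := by push_cast; ring
      have e2 : ((m + 1 : ℕ) : ℤ) - 1 = ((m : ℕ) : ℤ) := by push_cast; ring
      rw [e1, e2, h1, h0] at hrec
      push_cast at hrec ⊢
      linear_combination hrec

lemma gg_int (n : ℕ) (hn : 0 < n) (m : ℤ) (hm : |m| ≤ (n : ℤ)) :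
    gg n m = (m : ℂ) * gg n 1 := by
  rcases le_or_gt 0 m with h | h
  · lift m to ℕ using h
    have : m ≤ n := by exact_mod_cast (abs_of_nonneg (by positivity : (0:ℤ) ≤ (m:ℤ))) ▸ hm
    exact_mod_cast gg_nat n hn m this
  · have hm' : (0:ℤ) ≤ -m := by omega
    obtain ⟨m', hm'2⟩ := Int.eq_ofNat_of_zero_le hm'
    have hmn : m' ≤ n := by
      have : |m| = -m := abs_of_neg h
      omega
    have hmeq : m = -(m' : ℤ) := by omega
    rw [hmeq, gg_neg n hn ((m' : ℤ)), gg_nat n hn m' hmn]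
    push_cast
    ring

def Ssum (n : ℕ) : ℝ := ∑ k ∈ Finset.range (2 * n), 1 / Real.sin (xk n k / 2) ^ 2

lemma Ssum_pos (n : ℕ) (hn : 0 < n) : 0 < Ssum n := by
  unfold Ssum
  apply Finset.sum_pos
  · intro k hk
    have := sin_xk_half_pos hn (Finset.mem_range.mp hk)
    positivity
  · exact ⟨0, Finset.mem_range.mpr (by omega)⟩

lemma gg_top (n : ℕ) (hn : 0 < n) : gg n n = (Ssum n : ℂ) * I := by
  unfold gg Ssum
  rw [Complex.ofReal_sum, Finset.sum_mul]
  apply Finset.sum_congr rfl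
  intro k hk
  have hk' : k < 2 * n := Finset.mem_range.mp hk
  have hsin := sin_xk_half_pos hn hk'
  have hexp : Complex.exp (((n : ℕ) : ℂ) * ((xk n k : ℝ) : ℂ) * I) = (-1 : ℂ) ^ k * I := by
    have harg : ((n : ℕ) : ℂ) * ((xk n k : ℝ) : ℂ) * I
        = (k : ℕ) * (((Real.pi : ℝ) : ℂ) * I) + ((Real.pi / 2 : ℝ) : ℂ) * I := by
      unfold xk
      have hnc : (n : ℂ) ≠ 0 := Nat.cast_ne_zero.mpr (by omega)
      push_cast
      field_simp
    rw [harg, Complex.exp_add, Complex.exp_nat_mul, Complex.exp_mul_I]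
    rw [← Complex.ofReal_cos, ← Complex.ofReal_sin, Real.cos_pi, Real.sin_pi]
    have h2 : Complex.exp (((Real.pi / 2 : ℝ) : ℂ) * I) = I := by
      rw [Complex.exp_mul_I, ← Complex.ofReal_cos, ← Complex.ofReal_sin,
        Real.cos_pi_div_two, Real.sin_pi_div_two]
      simp
    rw [h2]
    push_cast
    ring
  have hmexp : ((n : ℤ) : ℂ) = ((n : ℕ) : ℂ) := by push_cast; ring
  rw [hmexp, hexp]
  have hs : Real.sin (xk n k / 2) ≠ 0 := ne_of_gt hsin
  have hreal : wk n k * (-1 : ℝ) ^ k = 1 / Real.sin (xk n k / 2) ^ 2 := by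
    unfold wk
    have h2 : ((-1:ℝ) ^ k) * ((-1:ℝ) ^ k) = 1 := by
      rw [← pow_add]; exact Even.neg_one_pow ⟨k, rfl⟩
    field_simp
    linear_combination h2
  calc (wk n k : ℂ) * ((-1 : ℂ) ^ k * I)
      = ((wk n k * (-1 : ℝ) ^ k : ℝ) : ℂ) * I := by push_cast; ring
    _ = ((1 / Real.sin (xk n k / 2) ^ 2 : ℝ) : ℂ) * I := by rw [hreal]


lemma key (n : ℕ) (hn : 0 < n) {ι : Type*} (s : Finset ι) (c : ι → ℂ) (μ : ι → ℤ)
    (hμ : ∀ i ∈ s, |μ i| ≤ (n : ℤ)) (M : ℝ)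
    (hM : ∀ t : ℝ, ‖∑ i ∈ s, c i * Complex.exp ((μ i : ℂ) * (t : ℂ) * I)‖ ≤ M) (θ : ℝ) :
    ‖∑ i ∈ s, (μ i : ℂ) * c i * Complex.exp ((μ i : ℂ) * (θ : ℂ) * I)‖ ≤ n * M := by
  set D := ∑ i ∈ s, (μ i : ℂ) * c i * Complex.exp ((μ i : ℂ) * (θ : ℂ) * I) with hD
  have hswap : (∑ k ∈ Finset.range (2*n), (wk n k : ℂ) *
      (∑ i ∈ s, c i * Complex.exp ((μ i : ℂ) * ((θ + xk n k : ℝ) : ℂ) * I)))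
      = gg n 1 * D := by
    simp_rw [Finset.mul_sum]
    rw [Finset.sum_comm]
    rw [hD, Finset.mul_sum]
    apply Finset.sum_congr rfl
    intro i hi
    have hsplit : ∀ k, Complex.exp ((μ i : ℂ) * ((θ + xk n k : ℝ) : ℂ) * I)
        = Complex.exp ((μ i : ℂ) * (θ : ℂ) * I) * Complex.exp ((μ i : ℂ) * ((xk n k : ℝ) : ℂ) * I) := by
      intro k; rw [← Complex.exp_add]; congr 1; push_cast; ring
    calc ∑ k ∈ Finset.range (2*n), (wk n k : ℂ) * (c i * Complex.exp ((μ i : ℂ) * ((θ + xk n k : ℝ) : ℂ) * I))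
        = (c i * Complex.exp ((μ i : ℂ) * (θ : ℂ) * I)) * gg n (μ i) := by
          unfold gg
          rw [Finset.mul_sum]
          apply Finset.sum_congr rfl
          intro k _
          rw [hsplit k]; ring
      _ = gg n 1 * ((μ i : ℂ) * c i * Complex.exp ((μ i : ℂ) * (θ : ℂ) * I)) := by
          rw [gg_int n hn (μ i) (hμ i hi)]; ring
  have hSpos := Ssum_pos n hn
  have hn0 : (0:ℝ) < n := by exact_mod_cast hn
  have hgg1 : gg n 1 = ((Ssum n / n : ℝ) : ℂ) * I := by
    have h1 := gg_top n hn
    have h2 := gg_nat n hn n le_rfl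
    rw [h2] at h1
    have hnc : (n : ℂ) ≠ 0 := Nat.cast_ne_zero.mpr (by omega)
    push_cast
    field_simp
    linear_combination h1
  have hnorm_gg1 : ‖gg n 1‖ = Ssum n / n := by
    rw [hgg1, norm_mul, Complex.norm_I, mul_one, Complex.norm_real]
    rw [Real.norm_eq_abs, abs_of_pos (by positivity)]
  have hbound : ‖gg n 1 * D‖ ≤ Ssum n * M := by
    rw [← hswap]
    refine le_trans (norm_sum_le _ _) ?_
    rw [show Ssum n * M = ∑ k ∈ Finset.range (2*n), (1 / Real.sin (xk n k / 2) ^ 2) * M by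
      unfold Ssum; rw [Finset.sum_mul]]
    apply Finset.sum_le_sum
    intro k hk
    have hsin := sin_xk_half_pos hn (Finset.mem_range.mp hk)
    rw [norm_mul]
    have h1 : ‖(wk n k : ℂ)‖ = 1 / Real.sin (xk n k / 2) ^ 2 := by
      rw [Complex.norm_real, Real.norm_eq_abs]
      unfold wk
      have h2 : |(-1:ℝ)^k| = 1 := by rw [_root_.abs_pow, abs_neg, abs_one, one_pow]
      rw [abs_div, h2, abs_of_pos (by positivity)]
    rw [h1]
    exact mul_le_mul_of_nonneg_left (hM _) (by positivity)
  calc ‖D‖ = (Ssum n / n)⁻¹ * ((Ssum n / n) * ‖D‖) := by field_simp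
    _ ≤ (Ssum n / n)⁻¹ * (Ssum n * M) := by
        apply mul_le_mul_of_nonneg_left _ (by positivity)
        rw [← hnorm_gg1, ← norm_mul]
        exact hbound
    _ = n * M := by field_simp

lemma hasDerivAt_expsum {ι : Type*} (s : Finset ι) (c : ι → ℂ) (μ : ι → ℤ) (θ : ℝ) :
    HasDerivAt (fun t : ℝ => ∑ i ∈ s, c i * Complex.exp ((μ i : ℂ) * (t : ℂ) * I))
      (∑ i ∈ s, ((μ i : ℂ) * I) * (c i * Complex.exp ((μ i : ℂ) * (θ : ℂ) * I))) θ := by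
  apply HasDerivAt.fun_sum
  intro i _
  have h0 : HasDerivAt (fun w : ℂ => (μ i : ℂ) * w * I) ((μ i : ℂ) * I) (θ : ℂ) := by
    simpa using ((hasDerivAt_id ((θ:ℝ) : ℂ)).const_mul ((μ i : ℂ))).mul_const I
  have h1 := h0.cexp
  have h2 := h1.comp_ofReal
  have h3 := h2.const_mul (c i)
  convert h3 using 1
  · rfl
  ring

lemma poly_cos_deriv (Q : Polynomial ℝ) (θ : ℝ) :
    HasDerivAt (fun t : ℝ => ((Q.eval (Real.cos t) : ℝ) : ℂ))
      (((Q.derivative.eval (Real.cos θ) * (-Real.sin θ) : ℝ) : ℂ)) θ := by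
  have h1 : HasDerivAt (fun t : ℝ => Q.eval (Real.cos t))
      (Q.derivative.eval (Real.cos θ) * (-Real.sin θ)) θ := by
    have := (Q.hasDerivAt (Real.cos θ)).comp θ (Real.hasDerivAt_cos θ)
    simpa [Function.comp_def] using this
  exact h1.ofReal_comp

lemma cos_pow_expand (θ : ℝ) (j : ℕ) :
    ((Real.cos θ : ℝ) : ℂ) ^ j
      = ∑ k ∈ Finset.range (j+1),
          ((j.choose k : ℂ) / 2 ^ j) * Complex.exp (((2*(k:ℤ) - j : ℤ) : ℂ) * (θ:ℂ) * I) := by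
  have hcos : ((Real.cos θ : ℝ) : ℂ)
      = (Complex.exp ((θ:ℂ) * I) + Complex.exp (-((θ:ℂ) * I))) / 2 := by
    rw [show -((θ:ℂ)*I) = ((-θ : ℝ):ℂ) * I by push_cast; ring]
    rw [Complex.exp_mul_I, Complex.exp_mul_I]
    rw [← Complex.ofReal_cos, ← Complex.ofReal_sin, ← Complex.ofReal_cos, ← Complex.ofReal_sin]
    rw [Real.cos_neg, Real.sin_neg]
    push_cast; ring
  rw [hcos, div_pow, add_pow, Finset.sum_div]
  apply Finset.sum_congr rfl
  intro k hk
  have hk' : k ≤ j := Nat.lt_succ_iff.mp (Finset.mem_range.mp hk)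
  have e1 : Complex.exp ((θ:ℂ)*I) ^ k = Complex.exp ((k:ℕ) * ((θ:ℂ)*I)) :=
    (Complex.exp_nat_mul _ k).symm
  have e2 : Complex.exp (-((θ:ℂ)*I)) ^ (j - k) = Complex.exp (((j-k : ℕ) : ℂ) * (-((θ:ℂ)*I))) :=
    (Complex.exp_nat_mul _ _).symm
  rw [e1, e2, ← Complex.exp_add]
  have hjk : ((j - k : ℕ) : ℂ) = (j : ℂ) - k := by
    push_cast [Nat.cast_sub hk']; ring
  rw [show ((k:ℕ):ℂ) * ((θ:ℂ)*I) + ((j-k:ℕ):ℂ) * (-((θ:ℂ)*I))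
      = ((2*(k:ℤ) - j : ℤ):ℂ) * (θ:ℂ) * I by rw [hjk]; push_cast; ring]
  ring

lemma poly_cos_expand (n : ℕ) (Q : Polynomial ℝ) (hQ : Q.natDegree ≤ n) (θ : ℝ) :
    ((Q.eval (Real.cos θ) : ℝ) : ℂ)
      = ∑ p ∈ (Finset.range (n+1)).sigma (fun j => Finset.range (j+1)),
          (((Q.coeff p.1 : ℝ) : ℂ) * (p.1.choose p.2 : ℂ) / 2 ^ p.1)
            * Complex.exp (((2*(p.2:ℤ) - p.1 : ℤ) : ℂ) * (θ:ℂ) * I) := by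
  rw [Finset.sum_sigma]
  rw [Polynomial.eval_eq_sum_range' (Nat.lt_succ_of_le hQ) (Real.cos θ)]
  rw [Complex.ofReal_sum]
  apply Finset.sum_congr rfl
  intro j _
  rw [Complex.ofReal_mul, Complex.ofReal_pow, cos_pow_expand θ j, Finset.mul_sum]
  apply Finset.sum_congr rfl
  intro k _
  ring

end BernsteinAux
end BernsteinAux

open BernsteinAux in
theorem bernstein_inequality (n : ℕ) (P : Polynomial ℝ) (hP : P.natDegree ≤ n)
    (a b : ℝ) (hab : a < b) (x : ℝ) (hx : x ∈ Set.Icc a b) :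
    |P.derivative.eval x| * Real.sqrt ((x - a) * (b - x)) ≤
      n * sSup ((fun t => |P.eval t|) '' Set.Icc a b) := by
  classical
  set M := sSup ((fun t => |P.eval t|) '' Set.Icc a b) with hMdef
  have hMb : BddAbove ((fun t => |P.eval t|) '' Set.Icc a b) := by
    apply IsCompact.bddAbove_image isCompact_Icc
    exact ((P.continuous_aeval).abs).continuousOn
  have hle : ∀ y ∈ Set.Icc a b, |P.eval y| ≤ M := fun y hy => le_csSup hMb ⟨y, hy, rfl⟩
  have hM0 : 0 ≤ M := le_trans (abs_nonneg _) (hle a ⟨le_refl a, le_of_lt hab⟩)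
  obtain ⟨hxa, hxb⟩ := hx
  rcases Nat.eq_zero_or_pos n with hn0 | hn
  · have hPdeg : P.natDegree = 0 := le_antisymm (hn0 ▸ hP) (Nat.zero_le _)
    have hPd : P.derivative = 0 := by
      rw [Polynomial.eq_C_of_natDegree_eq_zero hPdeg]
      exact Polynomial.derivative_C
    rw [hPd]
    simp [hn0]
  · set c0 := (a+b)/2 with hc0
    set r := (b-a)/2 with hr0
    have hr : 0 < r := by rw [hr0]; linarith
    set v := (x - c0)/r with hv0
    have hv1 : -1 ≤ v := by
      rw [hv0]
      rw [le_div_iff₀ hr]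
      rw [hc0]
      linarith
    have hv2 : v ≤ 1 := by
      rw [hv0, div_le_iff₀ hr, hc0]
      linarith
    set θ := Real.arccos v with hθ
    have hcos : Real.cos θ = v := Real.cos_arccos hv1 hv2
    have hsin : Real.sin θ = Real.sqrt (1 - v^2) := Real.sin_arccos v
    have hsin0 : 0 ≤ Real.sin θ := by rw [hsin]; exact Real.sqrt_nonneg _
    have hxeq : c0 + r * v = x := by rw [hv0]; field_simp; ring
    set Q := P.comp (Polynomial.C c0 + Polynomial.C r * Polynomial.X) with hQdef
    have hQdeg : Q.natDegree ≤ n := by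
      refine le_trans Polynomial.natDegree_comp_le ?_
      have h1 : (Polynomial.C c0 + Polynomial.C r * Polynomial.X).natDegree ≤ 1 := by
        refine le_trans (Polynomial.natDegree_add_le _ _) ?_
        simp [Polynomial.natDegree_C, Polynomial.natDegree_C_mul_X _ (ne_of_gt hr)]
      calc P.natDegree * (Polynomial.C c0 + Polynomial.C r * Polynomial.X).natDegree
          ≤ n * 1 := Nat.mul_le_mul hP h1
        _ = n := mul_one n
    have hQeval : ∀ y : ℝ, Q.eval y = P.eval (c0 + r * y) := by
      intro y; rw [hQdef, Polynomial.eval_comp]; simp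
    have hQbound : ∀ t : ℝ, |Q.eval (Real.cos t)| ≤ M := by
      intro t
      rw [hQeval]
      apply hle
      have e1 : c0 - r = a := by rw [hc0, hr0]; ring
      have e2 : c0 + r = b := by rw [hc0, hr0]; ring
      constructor
      · nlinarith [Real.neg_one_le_cos t, hr.le]
      · nlinarith [Real.cos_le_one t, hr.le]
    set S' := (Finset.range (n+1)).sigma (fun j => Finset.range (j+1)) with hS'
    set cc : (Σ _ : ℕ, ℕ) → ℂ :=
      fun p => ((Q.coeff p.1 : ℝ) : ℂ) * (p.1.choose p.2 : ℂ) / 2 ^ p.1 with hcc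
    set μ : (Σ _ : ℕ, ℕ) → ℤ := fun p => 2*(p.2:ℤ) - p.1 with hμdef
    have hexpand : ∀ t : ℝ, ((Q.eval (Real.cos t) : ℝ) : ℂ)
        = ∑ p ∈ S', cc p * Complex.exp ((μ p : ℂ) * (t:ℂ) * Complex.I) := by
      intro t
      exact BernsteinAux.poly_cos_expand n Q hQdeg t
    have hμb : ∀ p ∈ S', |μ p| ≤ (n:ℤ) := by
      intro p hp
      obtain ⟨h1, h2⟩ := Finset.mem_sigma.mp hp
      have e1 : p.1 ≤ n := Nat.lt_succ_iff.mp (Finset.mem_range.mp h1)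
      have e2 : p.2 ≤ p.1 := Nat.lt_succ_iff.mp (Finset.mem_range.mp h2)
      rw [hμdef, abs_le]
      constructor <;> [skip; skip] <;> simp only [] <;> omega
    have hMexp : ∀ t : ℝ, ‖∑ p ∈ S', cc p * Complex.exp ((μ p : ℂ) * (t:ℂ) * Complex.I)‖ ≤ M := by
      intro t
      rw [← hexpand t, Complex.norm_real, Real.norm_eq_abs]
      exact hQbound t
    have hkey := BernsteinAux.key n hn S' cc μ hμb M hMexp θ
    have hD : ((Q.derivative.eval (Real.cos θ) * (-Real.sin θ) : ℝ) : ℂ)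
        = ∑ p ∈ S', ((μ p : ℂ) * Complex.I) * (cc p * Complex.exp ((μ p : ℂ) * (θ:ℂ) * Complex.I)) := by
      have h1 := BernsteinAux.poly_cos_deriv Q θ
      have h2 := BernsteinAux.hasDerivAt_expsum S' cc μ θ
      have hfun : (fun u : ℝ => ((Q.eval (Real.cos u) : ℝ) : ℂ))
          = fun u : ℝ => ∑ p ∈ S', cc p * Complex.exp ((μ p : ℂ) * ((u : ℝ) : ℂ) * Complex.I) := funext hexpand
      rw [hfun] at h1
      exact h1.unique h2
    have hIfactor : ∑ p ∈ S', ((μ p : ℂ) * Complex.I) * (cc p * Complex.exp ((μ p : ℂ) * (θ:ℂ) * Complex.I))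
        = Complex.I * ∑ p ∈ S', (μ p : ℂ) * cc p * Complex.exp ((μ p : ℂ) * (θ:ℂ) * Complex.I) := by
      rw [Finset.mul_sum]; apply Finset.sum_congr rfl; intro p _; ring
    have habs : |Q.derivative.eval (Real.cos θ) * (-Real.sin θ)| ≤ n * M := by
      calc |Q.derivative.eval (Real.cos θ) * (-Real.sin θ)|
          = ‖((Q.derivative.eval (Real.cos θ) * (-Real.sin θ) : ℝ) : ℂ)‖ := by
            rw [Complex.norm_real, Real.norm_eq_abs]
        _ = ‖Complex.I * ∑ p ∈ S', (μ p : ℂ) * cc p * Complex.exp ((μ p : ℂ) * (θ:ℂ) * Complex.I)‖ := by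
            rw [hD, hIfactor]
        _ = ‖∑ p ∈ S', (μ p : ℂ) * cc p * Complex.exp ((μ p : ℂ) * (θ:ℂ) * Complex.I)‖ := by
            rw [norm_mul, Complex.norm_I, one_mul]
        _ ≤ n * M := hkey
    have hQder : Q.derivative.eval (Real.cos θ) = r * P.derivative.eval x := by
      rw [hQdef, Polynomial.derivative_comp]
      rw [Polynomial.eval_mul, Polynomial.eval_comp]
      simp [hcos, hxeq]
    rw [hQder] at habs
    have hsqrt : Real.sqrt ((x - a) * (b - x)) = r * Real.sin θ := by
      have h1 : (x - a) * (b - x) = r^2 * (1 - v^2) := by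
        have hrne : r ≠ 0 := ne_of_gt hr
        have h2 : r^2 * (1 - v^2) = r^2 - (x - c0)^2 := by
          rw [hv0]
          field_simp
        rw [h2, hc0, hr0]
        ring
      rw [h1, hsin, Real.sqrt_mul (by positivity), Real.sqrt_sq hr.le]
    rw [hsqrt]
    calc |P.derivative.eval x| * (r * Real.sin θ)
        = |r * P.derivative.eval x * (-Real.sin θ)| := by
          rw [abs_mul, abs_mul, abs_neg, abs_of_pos hr, _root_.abs_of_nonneg hsin0]; ring
      _ ≤ n * M := habs
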